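/- There exists a constant A > 0 such that for every f ∈ BMO_1(μ) there is a bounded linear functional L_f on H^1(μ) satisfying L_f(g) = ∫ f g dμ for every g ∈ H^{1,∞}_fin(μ), and ‖L_f‖_{(H^1)^*} ≤ A ‖f‖_{BMO_1}. -/

import Mathlib

open MeasureTheory Set ENNReal Filter Function

/-- A weighted homogeneous tree setting: the homogeneous tree of order `m+1`
(a connected acyclic graph in which every vertex has `m+1` neighbours),
with a fixed doubly infinite geodesic `geo`, a numeration `idx` of `geo`,
the associated level function `level`, and the weighted measure `μ`
with `μ {x} = m ^ level x`. -/
structure HomTreeSetting (m : ℕ) : Type 1 where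
  V : Type
  measV : MeasurableSpace V
  measTop : measV = ⊤
  hm : 2 ≤ m
  G : SimpleGraph V
  conn : G.Connected
  acyclic : G.IsAcyclic
  deg : ∀ x : V, (G.neighborSet x).ncard = m + 1
  geo : Set V
  geoNbrs : ∀ v ∈ geo, (G.neighborSet v ∩ geo).ncard = 2
  geoGeodesic : ∀ u ∈ geo, ∀ v ∈ geo, ∀ w : V,
    G.dist u w + G.dist w v = G.dist u v → w ∈ geo
  idx : geo → ℤ
  idxBij : Function.Bijective idx
  idxDist : ∀ x y : geo, |idx x - idx y| = (G.dist x.1 y.1 : ℤ)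
  level : V → ℤ
  levelSpec : ∀ x : V, ∃ x' : geo,
    (∀ z : geo, G.dist x x'.1 ≤ G.dist x z.1) ∧
    level x = idx x' - (G.dist x x'.1 : ℤ)
  μ : @MeasureTheory.Measure V measV
  μspec : ∀ s : Set V, μ s = ∑' x : s, (m : ℝ≥0∞) ^ (level x.1)

attribute [instance] HomTreeSetting.measV

namespace HomTreeSetting

variable {m : ℕ}

/-- `x` lies below `y`. -/
def Below (S : HomTreeSetting m) (x y : S.V) : Prop :=
  S.level x = S.level y - (S.G.dist x y : ℤ)

/-- An admissible trapezoid: either degenerate (a singleton, with height 1) or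
the set of vertices lying below `root` whose level gap lies in `[ht, 2*ht)`. -/
structure AdmTrap (S : HomTreeSetting m) where
  root : S.V
  ht : ℕ
  ht_pos : 1 ≤ ht
  degen : Bool
  degen_ht : degen = true → ht = 1

variable {S : HomTreeSetting m}

/-- The underlying set of vertices of an admissible trapezoid. -/
def AdmTrap.set (R : S.AdmTrap) : Set S.V :=
  if R.degen then {R.root}
  else {x | S.Below x R.root ∧ (R.ht : ℤ) ≤ S.level R.root - S.level x ∧
    S.level R.root - S.level x < 2 * (R.ht : ℤ)}

/-- The envelope (Calderón–Zygmund set) of an admissible trapezoid. -/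
def AdmTrap.env (R : S.AdmTrap) : Set S.V :=
  if R.degen then {R.root}
  else {x | S.Below x R.root ∧ (R.ht : ℤ) ≤ 2 * (S.level R.root - S.level x) ∧
    S.level R.root - S.level x < 4 * (R.ht : ℤ)}

/-- The width `w(R) = m ^ ℓ(x_R)` of an admissible trapezoid. -/
noncomputable def AdmTrap.width (R : S.AdmTrap) : ℝ≥0∞ :=
  (m : ℝ≥0∞) ^ (S.level R.root)

/-- The dilated set `R̃* = {x : d(x, R̃) < h(R̃)/4}` of a Calderón–Zygmund set. -/
def AdmTrap.star (R : S.AdmTrap) : Set S.V :=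
  {x | ∃ y ∈ R.env, 4 * S.G.dist x y < R.ht}

variable (S)

/-- `E` is a Calderón–Zygmund set, i.e. the envelope of an admissible trapezoid. -/
def IsCZ (E : Set S.V) : Prop := ∃ R : S.AdmTrap, E = R.env

/-- Average of `f` over the set `E` with respect to `μ`. -/
noncomputable def avg (f : S.V → ℂ) (E : Set S.V) : ℂ :=
  (S.μ E).toReal⁻¹ • ∫ x in E, f x ∂S.μ

/-- The `q`-mean oscillation `(μ(E)⁻¹ ∫_E |f - f_E|^q dμ)^(1/q)` of `f` on `E`. -/
noncomputable def osc (q : ℝ) (f : S.V → ℂ) (E : Set S.V) : ℝ :=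
  ((S.μ E).toReal⁻¹ * ∫ x in E, ‖f x - S.avg f E‖ ^ q ∂S.μ) ^ (1 / q)

/-- The `BMO_q(μ)` (semi)norm. -/
noncomputable def bmoNorm (q : ℝ) (f : S.V → ℂ) : ℝ :=
  ⨆ R : S.AdmTrap, S.osc q f R.env

/-- Membership in `BMO_q(μ)`. -/
def MemBMO (q : ℝ) (f : S.V → ℂ) : Prop :=
  BddAbove (Set.range fun R : S.AdmTrap => S.osc q f R.env)

/-- A `(1,p)`-atom (`p = ⊤` gives `(1,∞)`-atoms). -/
def IsAtom (p : ℝ≥0∞) (a : S.V → ℂ) : Prop :=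
  ∃ R : S.AdmTrap, Function.support a ⊆ R.env ∧
    eLpNorm a p S.μ ≤ S.μ R.env ^ ((p⁻¹).toReal - 1) ∧
    ∫ x, a x ∂S.μ = 0

/-- `f = ∑ j, c j • a j` is an atomic decomposition of `f` with `(1,p)`-atoms
`a j` and `∑ j, ‖c j‖ < ∞`, the series converging to `f` in `L¹(μ)`. -/
def IsAtomicDecomp (p : ℝ≥0∞) (f : S.V → ℂ) (c : ℕ → ℂ) (a : ℕ → S.V → ℂ) : Prop :=
  (∀ j, S.IsAtom p (a j)) ∧ Summable (fun j => ‖c j‖) ∧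
  Filter.Tendsto
    (fun n => eLpNorm (fun x => f x - ∑ j ∈ Finset.range n, c j * a j x) 1 S.μ)
    Filter.atTop (nhds 0)

/-- Membership in the atomic Hardy space `H^{1,p}(μ)`. -/
def MemH1 (p : ℝ≥0∞) (f : S.V → ℂ) : Prop :=
  MeasureTheory.Integrable f S.μ ∧ ∃ c a, S.IsAtomicDecomp p f c a

/-- The `H^{1,p}(μ)` norm: infimum of `∑ j, ‖c j‖` over atomic decompositions. -/
noncomputable def h1Norm (p : ℝ≥0∞) (f : S.V → ℂ) : ℝ :=
  sInf {t : ℝ | ∃ c a, S.IsAtomicDecomp p f c a ∧ t = ∑' j, ‖c j‖}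

/-- Membership in `H^{1,p}_fin(μ)`: finite linear combinations of `(1,p)`-atoms. -/
def MemH1fin (p : ℝ≥0∞) (f : S.V → ℂ) : Prop :=
  ∃ (n : ℕ) (c : ℕ → ℂ) (a : ℕ → S.V → ℂ),
    (∀ j, j < n → S.IsAtom p (a j)) ∧
    f = fun x => ∑ j ∈ Finset.range n, c j * a j x

/-- The sharp maximal function `f^{♯,q}`. -/
noncomputable def sharpMax (q : ℝ) (f : S.V → ℂ) (x : S.V) : ℝ :=
  ⨆ R : {R : S.AdmTrap // x ∈ R.env}, S.osc q f R.1.env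

end HomTreeSetting


open Topology

namespace HomTreeSetting

variable {m : ℕ} {S : HomTreeSetting m}

lemma measSet {s : Set S.V} : MeasurableSet s := by
  have h : (S.measV : MeasurableSpace S.V) = ⊤ := S.measTop
  exact h ▸ trivial

instance msc (S : HomTreeSetting m) : MeasurableSingletonClass S.V :=
  ⟨fun _ => measSet⟩

lemma measFun {X : Type*} [MeasurableSpace X] (f : S.V → X) : Measurable f :=
  fun _ _ => measSet

lemma aesm (f : S.V → ℂ) : AEStronglyMeasurable f S.μ :=
  (measFun f).stronglyMeasurable.aestronglyMeasurable

lemma hm0 (S : HomTreeSetting m) : (m : ℝ≥0∞) ≠ 0 := by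
  have h := S.hm
  exact_mod_cast (by omega : m ≠ 0)

lemma mu_singleton (x : S.V) : S.μ {x} = (m : ℝ≥0∞) ^ S.level x := by
  rw [S.μspec]; exact tsum_singleton x (fun v => (m : ℝ≥0∞) ^ S.level v)

lemma mu_singleton_pos (x : S.V) : 0 < S.μ {x} := by
  rw [mu_singleton]
  exact ENNReal.zpow_pos (hm0 S) coe_ne_top _

lemma mu_singleton_ne_top (x : S.V) : S.μ {x} ≠ ⊤ := by
  rw [mu_singleton]
  exact (ENNReal.zpow_lt_top (hm0 S) coe_ne_top _).ne

lemma mu_coe_finset (s : Finset S.V) : S.μ ↑s = ∑ x ∈ s, S.μ {x} := by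
  rw [S.μspec, Finset.tsum_subtype' s (fun v => (m : ℝ≥0∞) ^ S.level v)]
  exact Finset.sum_congr rfl fun x _ => (mu_singleton x).symm

lemma mu_finset_ne_top (s : Finset S.V) : S.μ ↑s ≠ ⊤ := by
  rw [mu_coe_finset]
  exact (ENNReal.sum_lt_top.mpr fun x _ => (mu_singleton_ne_top x).lt_top).ne

lemma ae_all {P : S.V → Prop} (h : ∀ᵐ x ∂S.μ, P x) (x : S.V) : P x := by
  by_contra hx
  have h1 : S.μ {y | ¬ P y} = 0 := h
  have h2 : S.μ {x} ≤ S.μ {y | ¬ P y} :=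
    measure_mono (by simpa using hx)
  exact absurd (le_antisymm (h1 ▸ h2) zero_le) (mu_singleton_pos x).ne'


section Integrals

variable {E : Type*} [NormedAddCommGroup E] [NormedSpace ℝ E] [CompleteSpace E]

lemma integrableOn_finset' (f : S.V → E) (s : Finset S.V) :
    IntegrableOn f ↑s S.μ := by
  have h : (↑s : Set S.V) = ⋃ x ∈ s, {x} := by ext y; simp
  rw [h]
  refine integrableOn_finset_iUnion.mpr fun x _ => ?_
  rw [integrableOn_singleton_iff]
  exact Or.inr (mu_singleton_ne_top x).lt_top

lemma integrable_of_support_subset {f : S.V → E} {s : Finset S.V}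
    (h : support f ⊆ ↑s) : Integrable f S.μ := by
  have hf : f = Set.indicator ↑s f := (Set.indicator_eq_self.mpr h).symm
  rw [hf]
  exact (integrable_indicator_iff measSet).mpr (integrableOn_finset' f s)

lemma integral_eq_sum {f : S.V → E} {s : Finset S.V} (h : support f ⊆ ↑s) :
    ∫ x, f x ∂S.μ = ∑ x ∈ s, (S.μ {x}).toReal • f x := by
  rw [← setIntegral_eq_integral_of_forall_compl_eq_zero
    (fun x hx => by_contra fun hfx => hx (h hfx))]
  exact integral_finset s (integrableOn_finset' f s)

end Integrals

section Graph

lemma neighbor_finite (x : S.V) : (S.G.neighborSet x).Finite := by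
  by_contra h
  have h2 := S.deg x
  rw [Set.Infinite.ncard (fun hf => h hf)] at h2
  omega

lemma ball_finite (x : S.V) (n : ℕ) : {y : S.V | S.G.dist x y ≤ n}.Finite := by
  induction n with
  | zero =>
    refine (Set.finite_singleton x).subset fun y hy => ?_
    simp only [Set.mem_setOf_eq, Nat.le_zero] at hy
    have hr : S.G.Reachable x y := S.conn.preconnected x y
    simp only [Set.mem_singleton_iff]
    exact (SimpleGraph.Reachable.dist_eq_zero_iff hr |>.mp hy).symm
  | succ n ih =>
    refine Set.Finite.subset (ih.union (ih.biUnion fun w _ => neighbor_finite w))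
      fun y hy => ?_
    simp only [Set.mem_setOf_eq] at hy
    rcases Nat.lt_or_ge (S.G.dist x y) (n+1) with h | h
    · exact Or.inl (Nat.lt_succ_iff.mp h)
    have hd : S.G.dist x y = n + 1 := le_antisymm hy h
    obtain ⟨p, hp⟩ := (S.conn.preconnected y x).exists_walk_length_eq_dist
    have hpl : p.length = n + 1 := by
      rw [hp, SimpleGraph.dist_comm, hd]
    cases p with
    | nil => simp at hpl
    | cons hadj q =>
      rename_i w
      right
      refine Set.mem_biUnion (s := {y : S.V | S.G.dist x y ≤ n}) (t := fun w => S.G.neighborSet w)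
        ?_ hadj.symm
      simp only [Set.mem_setOf_eq]
      have : S.G.dist w x ≤ q.length := SimpleGraph.dist_le q
      rw [SimpleGraph.dist_comm]
      simp only [SimpleGraph.Walk.length_cons] at hpl
      omega

lemma env_finite (R : S.AdmTrap) : R.env.Finite := by
  by_cases hR : R.degen
  · rw [AdmTrap.env, if_pos hR]
    exact Set.finite_singleton _
  · rw [AdmTrap.env, if_neg hR]
    refine (ball_finite R.root (4 * R.ht)).subset fun x hx => ?_
    obtain ⟨hb, _, hlt⟩ := hx
    rw [Below] at hb
    simp only [Set.mem_setOf_eq]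
    rw [SimpleGraph.dist_comm]
    omega

end Graph

section Clamp

noncomputable def clampR (t r : ℝ) : ℝ := max (min r t) (-t)

lemma clampR_lip (t a b : ℝ) : |clampR t a - clampR t b| ≤ |a - b| := by
  refine (abs_max_sub_max_le_abs _ _ _).trans ?_
  refine (abs_min_sub_min_le_max a t b t).trans ?_
  simp

lemma clampR_abs_le {t : ℝ} (ht : 0 ≤ t) (r : ℝ) : |clampR t r| ≤ t := by
  rw [abs_le]
  exact ⟨le_max_right _ _, max_le ((min_le_right _ _)) (neg_le_self ht)⟩

lemma clampR_eq {t r : ℝ} (h : |r| ≤ t) : clampR t r = r := by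
  have h' := abs_le.mp h
  rw [clampR, min_eq_left h'.2, max_eq_left (by linarith [h'.1])]

noncomputable def clampC (t : ℝ) (z : ℂ) : ℂ := ⟨clampR t z.re, clampR t z.im⟩

lemma sq_le_sq'' {a b : ℝ} (h : |a| ≤ |b|) : a * a ≤ b * b := by
  calc a * a = |a| * |a| := (abs_mul_abs_self a).symm
  _ ≤ |b| * |b| := mul_le_mul h h (abs_nonneg a) (abs_nonneg b)
  _ = b * b := abs_mul_abs_self b

lemma clampC_lip (t : ℝ) (z w : ℂ) : ‖clampC t z - clampC t w‖ ≤ ‖z - w‖ := by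
  rw [Complex.norm_def, Complex.norm_def]
  apply Real.sqrt_le_sqrt
  rw [Complex.normSq_apply, Complex.normSq_apply]
  have h1 : (clampC t z - clampC t w).re = clampR t z.re - clampR t w.re := by
    simp [clampC]
  have h2 : (clampC t z - clampC t w).im = clampR t z.im - clampR t w.im := by
    simp [clampC]
  rw [h1, h2, Complex.sub_re, Complex.sub_im]
  have e1 : |clampR t z.re - clampR t w.re| ≤ |z.re - w.re| := clampR_lip t _ _
  have e2 : |clampR t z.im - clampR t w.im| ≤ |z.im - w.im| := clampR_lip t _ _
  have := sq_le_sq'' (e1.trans (le_abs_self _))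
  have := sq_le_sq'' (e2.trans (le_abs_self _))
  have a1 : |z.re - w.re| * |z.re - w.re| = (z.re - w.re) * (z.re - w.re) :=
    abs_mul_abs_self _
  nlinarith [sq_le_sq'' (show |clampR t z.re - clampR t w.re| ≤ |z.re - w.re| from e1),
    sq_le_sq'' (show |clampR t z.im - clampR t w.im| ≤ |z.im - w.im| from e2)]

lemma clampC_norm_le {t : ℝ} (ht : 0 ≤ t) (z : ℂ) : ‖clampC t z‖ ≤ 2 * t := by
  refine (Complex.norm_le_abs_re_add_abs_im _).trans ?_
  have h1 : |(clampC t z).re| ≤ t := clampR_abs_le ht _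
  have h2 : |(clampC t z).im| ≤ t := clampR_abs_le ht _
  linarith

lemma clampC_eq {t : ℝ} {z : ℂ} (h1 : |z.re| ≤ t) (h2 : |z.im| ≤ t) :
    clampC t z = z := Complex.ext (clampR_eq h1) (clampR_eq h2)

end Clamp

section Osc

lemma exists_trap (S : HomTreeSetting m) : Nonempty S.AdmTrap := by
  obtain ⟨v, -⟩ := S.idxBij.surjective 0
  exact ⟨⟨v.1, 1, le_refl 1, true, fun _ => rfl⟩⟩

lemma osc_nonneg (q : ℝ) (f : S.V → ℂ) (E : Set S.V) : 0 ≤ S.osc q f E := by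
  refine Real.rpow_nonneg (mul_nonneg (inv_nonneg.mpr ENNReal.toReal_nonneg) ?_) _
  exact integral_nonneg fun x => Real.rpow_nonneg (norm_nonneg _) _

lemma osc_le_bmoNorm {f : S.V → ℂ} (hf : S.MemBMO 1 f) (R : S.AdmTrap) :
    S.osc 1 f R.env ≤ S.bmoNorm 1 f := le_ciSup hf R

lemma bmoNorm_nonneg {f : S.V → ℂ} (hf : S.MemBMO 1 f) : 0 ≤ S.bmoNorm 1 f := by
  obtain ⟨R⟩ := exists_trap S
  exact (osc_nonneg 1 f R.env).trans (osc_le_bmoNorm hf R)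

end Osc


section Pairing

variable {f : S.V → ℂ}

lemma atom_support_finset {b : S.V → ℂ} (hb : S.IsAtom ⊤ b) :
    ∃ s : Finset S.V, support b ⊆ ↑s := by
  obtain ⟨R, hs, -, -⟩ := hb
  exact ⟨(env_finite R).toFinset, by rwa [Set.Finite.coe_toFinset]⟩

lemma atom_integrable {b : S.V → ℂ} (hb : S.IsAtom ⊤ b) : Integrable b S.μ := by
  obtain ⟨s, hs⟩ := atom_support_finset hb
  exact integrable_of_support_subset hs

lemma support_mul_subset (F b : S.V → ℂ) :
    support (fun x => F x * b x) ⊆ support b := fun x hx => by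
  simp only [mem_support] at hx ⊢
  exact fun h => hx (by rw [h, mul_zero])

lemma mul_atom_integrable (F : S.V → ℂ) {b : S.V → ℂ} (hb : S.IsAtom ⊤ b) :
    Integrable (fun x => F x * b x) S.μ := by
  obtain ⟨s, hs⟩ := atom_support_finset hb
  exact integrable_of_support_subset ((support_mul_subset F b).trans hs)

lemma pairing_bound (hf : S.MemBMO 1 f) {T : ℂ → ℂ}
    (hT : ∀ z w, ‖T z - T w‖ ≤ ‖z - w‖) {b : S.V → ℂ} (hb : S.IsAtom ⊤ b) :
    ‖∫ x, T (f x) * b x ∂S.μ‖ ≤ 2 * S.bmoNorm 1 f := by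
  obtain ⟨R, hsupp, hbd, hzero⟩ := hb
  by_cases hE : R.env = ∅
  · have hb0 : ∀ x, b x = 0 := fun x => by
      by_contra h
      exact absurd (hsupp h) (by simp [hE])
    have : (fun x => T (f x) * b x) = fun _ => (0 : ℂ) := funext fun x => by
      rw [hb0 x, mul_zero]
    rw [this]
    simp only [integral_const, smul_zero, norm_zero]
    have := bmoNorm_nonneg hf
    linarith
  · -- main case
    have Efin : R.env.Finite := env_finite R
    set s : Finset S.V := Efin.toFinset with hs_def
    have hcoe : (↑s : Set S.V) = R.env := Efin.coe_toFinset
    have hsupp' : support b ⊆ ↑s := by rwa [hcoe]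
    obtain ⟨x₀, hx₀⟩ := Set.nonempty_iff_ne_empty.mpr hE
    have hμE_ne_top : S.μ R.env ≠ ⊤ := by rw [← hcoe]; exact mu_finset_ne_top s
    have hμE_pos : 0 < S.μ R.env :=
      lt_of_lt_of_le (mu_singleton_pos x₀) (measure_mono (by simpa using hx₀))
    set w : ℝ := (S.μ R.env).toReal with hw_def
    have hw : 0 < w := ENNReal.toReal_pos hμE_pos.ne' hμE_ne_top
    set px : S.V → ℝ := fun x => (S.μ {x}).toReal with hpx_def
    have hpx : ∀ x, 0 ≤ px x := fun x => ENNReal.toReal_nonneg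
    have hsum : ∑ x ∈ s, px x = w := by
      rw [hw_def, ← hcoe, mu_coe_finset]
      exact (ENNReal.toReal_sum fun x _ => mu_singleton_ne_top x).symm
    -- pointwise bound on b
    have hbp : ∀ x, ‖b x‖ ≤ w⁻¹ := by
      intro x
      have h1 : (‖b x‖₊ : ℝ≥0∞) ≤ eLpNormEssSup b S.μ :=
        ae_all (ae_le_eLpNormEssSup (f := b) (μ := S.μ)) x
      have h2 : eLpNorm b ⊤ S.μ ≤ (S.μ R.env)⁻¹ := by
        rw [show ((⊤ : ℝ≥0∞)⁻¹.toReal - 1) = -1 by simp] at hbd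
        rwa [ENNReal.rpow_neg_one] at hbd
      have h3 : (‖b x‖₊ : ℝ≥0∞) ≤ (S.μ R.env)⁻¹ := by
        rw [eLpNorm_exponent_top] at h2
        exact h1.trans h2
      have h4 : ((‖b x‖₊ : ℝ≥0∞)).toReal ≤ ((S.μ R.env)⁻¹).toReal :=
        ENNReal.toReal_mono (by simp [hμE_pos.ne']) h3
      simpa [ENNReal.toReal_inv] using h4
    -- sum formulas
    have hIb : ∑ x ∈ s, px x • b x = 0 := by
      rw [← integral_eq_sum hsupp']
      exact hzero
    set F : S.V → ℂ := fun x => T (f x) with hF_def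
    have hFb : ∫ x, F x * b x ∂S.μ = ∑ x ∈ s, px x • (F x * b x) :=
      integral_eq_sum ((support_mul_subset F b).trans hsupp')
    set avgF : ℂ := S.avg f R.env with havgF_def
    have havg : avgF = w⁻¹ • ∑ x ∈ s, px x • f x := by
      rw [havgF_def, avg]
      congr 1
      rw [← integral_indicator measSet]
      rw [integral_eq_sum (s := s) (Set.support_indicator_subset.trans (by rw [hcoe]))]
      refine Finset.sum_congr rfl fun x hx => ?_
      rw [Set.indicator_of_mem (by rw [← hcoe]; exact_mod_cast hx)]
    set Sig : ℝ := ∑ y ∈ s, px y * ‖f y - avgF‖ with hSig_def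
    have hSig : 0 ≤ Sig :=
      Finset.sum_nonneg fun y _ => mul_nonneg (hpx y) (norm_nonneg _)
    have hosc : S.osc 1 f R.env = w⁻¹ * Sig := by
      rw [osc]
      simp only [Real.rpow_one, ne_eq, one_ne_zero, not_false_eq_true, div_self]
      congr 1
      rw [← integral_indicator measSet]
      rw [integral_eq_sum (s := s) (Set.support_indicator_subset.trans (by rw [hcoe]))]
      refine Finset.sum_congr rfl fun x hx => ?_
      rw [Set.indicator_of_mem (by rw [← hcoe]; exact_mod_cast hx), smul_eq_mul]
    set avgT : ℂ := w⁻¹ • ∑ x ∈ s, px x • F x with havgT_def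
    have key2 : ∀ x ∈ s, ‖F x - avgT‖ ≤ ‖f x - avgF‖ + w⁻¹ * Sig := by
      intro x hx
      have key1 : F x - avgT = w⁻¹ • ∑ y ∈ s, px y • (F x - F y) := by
        have e1 : ∑ y ∈ s, px y • (F x - F y)
            = (∑ y ∈ s, px y) • F x - ∑ y ∈ s, px y • F y := by
          rw [Finset.sum_smul]
          rw [← Finset.sum_sub_distrib]
          exact Finset.sum_congr rfl fun y _ => smul_sub _ _ _
        rw [e1, hsum, smul_sub, smul_smul, inv_mul_cancel₀ hw.ne', one_smul, havgT_def]
      rw [key1, norm_smul, norm_inv, Real.norm_eq_abs, abs_of_pos hw]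
      have e2 : ‖∑ y ∈ s, px y • (F x - F y)‖ ≤ w * ‖f x - avgF‖ + Sig := by
        refine (norm_sum_le _ _).trans ?_
        have e3 : ∀ y ∈ s, ‖px y • (F x - F y)‖
            ≤ px y * (‖f x - avgF‖ + ‖f y - avgF‖) := by
          intro y hy
          rw [norm_smul, Real.norm_eq_abs, abs_of_nonneg (hpx y)]
          refine mul_le_mul_of_nonneg_left ?_ (hpx y)
          refine (hT (f x) (f y)).trans ?_
          calc ‖f x - f y‖ = ‖(f x - avgF) - (f y - avgF)‖ := by ring_nf
          _ ≤ ‖f x - avgF‖ + ‖f y - avgF‖ := norm_sub_le _ _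
        refine (Finset.sum_le_sum e3).trans ?_
        rw [show (∑ y ∈ s, px y * (‖f x - avgF‖ + ‖f y - avgF‖))
            = (∑ y ∈ s, px y) * ‖f x - avgF‖ + Sig by
          rw [Finset.sum_mul, ← Finset.sum_add_distrib]
          exact Finset.sum_congr rfl fun y _ => by ring]
        rw [hsum]
      calc w⁻¹ * ‖∑ y ∈ s, px y • (F x - F y)‖
          ≤ w⁻¹ * (w * ‖f x - avgF‖ + Sig) := by
            exact mul_le_mul_of_nonneg_left e2 (inv_nonneg.mpr hw.le)
      _ = ‖f x - avgF‖ + w⁻¹ * Sig := by field_simp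
    -- main estimate
    have hI2 : ∑ x ∈ s, px x • (F x * b x)
        = ∑ x ∈ s, px x • ((F x - avgT) * b x) := by
      have e : ∀ x ∈ s, px x • (F x * b x)
          = px x • ((F x - avgT) * b x) + avgT * (px x • b x) := by
        intro x _
        rw [mul_smul_comm]
        rw [← smul_add]
        congr 1
        ring
      rw [Finset.sum_congr rfl e, Finset.sum_add_distrib, ← Finset.mul_sum, hIb,
        mul_zero, add_zero]
    rw [hFb, hI2]
    calc ‖∑ x ∈ s, px x • ((F x - avgT) * b x)‖
        ≤ ∑ x ∈ s, px x * (‖F x - avgT‖ * ‖b x‖) := by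
          refine (norm_sum_le _ _).trans (Finset.sum_le_sum fun x _ => ?_)
          rw [norm_smul, Real.norm_eq_abs, abs_of_nonneg (hpx x), norm_mul]
    _ ≤ ∑ x ∈ s, px x * ((‖f x - avgF‖ + w⁻¹ * Sig) * w⁻¹) := by
          refine Finset.sum_le_sum fun x hx => ?_
          refine mul_le_mul_of_nonneg_left ?_ (hpx x)
          exact mul_le_mul (key2 x hx) (hbp x) (norm_nonneg _)
            (by positivity)
    _ = 2 * (w⁻¹ * Sig) := by
          have expand : ∀ x ∈ s, px x * ((‖f x - avgF‖ + w⁻¹ * Sig) * w⁻¹)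
              = w⁻¹ * (px x * ‖f x - avgF‖) + px x * (w⁻¹ * Sig * w⁻¹) :=
            fun x _ => by ring
          rw [Finset.sum_congr rfl expand, Finset.sum_add_distrib, ← Finset.mul_sum,
            ← Finset.sum_mul, ← hSig_def, hsum]
          field_simp
          ring
    _ = 2 * S.osc 1 f R.env := by rw [hosc]
    _ ≤ 2 * S.bmoNorm 1 f := by
          have := osc_le_bmoNorm hf R
          linarith

end Pairing


section Decomp

variable {g g₁ g₂ : S.V → ℂ} {c c' : ℕ → ℂ} {a a' : ℕ → S.V → ℂ}

lemma atom_eLpNorm_one {b : S.V → ℂ} (hb : S.IsAtom ⊤ b) : eLpNorm b 1 S.μ ≤ 1 := by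
  obtain ⟨R, hsupp, hbd, -⟩ := hb
  by_cases hE : R.env = ∅
  · have hb0 : b = fun _ => (0 : ℂ) := funext fun x => by
      by_contra h
      exact absurd (hsupp h) (by simp [hE])
    rw [hb0]
    simp [eLpNorm_zero]
  · have Efin : R.env.Finite := env_finite R
    obtain ⟨x₀, hx₀⟩ := Set.nonempty_iff_ne_empty.mpr hE
    have hμE_ne_top : S.μ R.env ≠ ⊤ := by
      rw [← Efin.coe_toFinset]; exact mu_finset_ne_top _
    have hμE_pos : 0 < S.μ R.env :=
      lt_of_lt_of_le (mu_singleton_pos x₀) (measure_mono (by simpa using hx₀))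
    have h2 : eLpNorm b ⊤ S.μ ≤ (S.μ R.env)⁻¹ := by
      rw [show ((⊤ : ℝ≥0∞)⁻¹.toReal - 1) = -1 by simp] at hbd
      rwa [ENNReal.rpow_neg_one] at hbd
    have hbp : ∀ x, (‖b x‖₊ : ℝ≥0∞) ≤ (S.μ R.env)⁻¹ := by
      intro x
      refine (ae_all (ae_le_eLpNormEssSup (f := b) (μ := S.μ)) x).trans ?_
      rwa [eLpNorm_exponent_top] at h2
    rw [eLpNorm_one_eq_lintegral_enorm]
    calc ∫⁻ x, (‖b x‖₊ : ℝ≥0∞) ∂S.μ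
        ≤ ∫⁻ x, R.env.indicator (fun _ => (S.μ R.env)⁻¹) x ∂S.μ := by
          refine lintegral_mono fun x => ?_
          by_cases hx : x ∈ R.env
          · rw [Set.indicator_of_mem hx]; exact hbp x
          · rw [Set.indicator_of_notMem hx]
            have : b x = 0 := by_contra fun h => hx (hsupp h)
            simp [this]
    _ = (S.μ R.env)⁻¹ * S.μ R.env := by
          rw [lintegral_indicator measSet, setLIntegral_const]
    _ = 1 := ENNReal.inv_mul_cancel hμE_pos.ne' hμE_ne_top

lemma isAtom_zero : S.IsAtom ⊤ (fun _ => (0 : ℂ)) := by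
  obtain ⟨R⟩ := exists_trap S
  refine ⟨R, by simp [Function.support], ?_, by simp⟩
  rw [show (fun _ : S.V => (0 : ℂ)) = (0 : S.V → ℂ) from rfl, eLpNorm_zero]
  exact zero_le

def il {α : Type*} (u v : ℕ → α) : ℕ → α :=
  fun j => if j % 2 = 0 then u (j / 2) else v (j / 2)

lemma il_even {α : Type*} (u v : ℕ → α) (k : ℕ) : il u v (2 * k) = u k := by
  unfold il
  rw [if_pos (by omega)]
  congr 1
  omega

lemma il_odd {α : Type*} (u v : ℕ → α) (k : ℕ) : il u v (2 * k + 1) = v k := by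
  unfold il
  rw [if_neg (by omega)]
  congr 1
  omega

lemma sum_range_double {M : Type*} [AddCommMonoid M] (v : ℕ → M) (n : ℕ) :
    ∑ j ∈ Finset.range (2 * n), v j
      = ∑ k ∈ Finset.range n, v (2 * k) + ∑ k ∈ Finset.range n, v (2 * k + 1) := by
  induction n with
  | zero => simp
  | succ n ih =>
    rw [show 2 * (n + 1) = 2 * n + 1 + 1 by ring, Finset.sum_range_succ,
      Finset.sum_range_succ, ih, Finset.sum_range_succ, Finset.sum_range_succ]
    abel

lemma decomp_neg (h : S.IsAtomicDecomp ⊤ g c a) :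
    S.IsAtomicDecomp ⊤ (fun x => - g x) (fun j => - c j) a := by
  refine ⟨h.1, by simpa using h.2.1, ?_⟩
  have e : ∀ n, (fun x => -g x - ∑ j ∈ Finset.range n, -c j * a j x)
      = -(fun x => g x - ∑ j ∈ Finset.range n, c j * a j x) := by
    intro n; funext x
    simp only [Pi.neg_apply]
    have e2 : ∑ j ∈ Finset.range n, -c j * a j x
        = -∑ j ∈ Finset.range n, c j * a j x := by
      rw [← Finset.sum_neg_distrib]
      exact Finset.sum_congr rfl fun j _ => by ring
    rw [e2]; ring
  simp_rw [e, eLpNorm_neg]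
  exact h.2.2

lemma decomp_smul (c₀ : ℂ) (h : S.IsAtomicDecomp ⊤ g c a) :
    S.IsAtomicDecomp ⊤ (c₀ • g) (fun j => c₀ * c j) a := by
  refine ⟨h.1, ?_, ?_⟩
  · simp_rw [norm_mul]
    exact (h.2.1.mul_left ‖c₀‖)
  · have e : ∀ n, (fun x => (c₀ • g) x - ∑ j ∈ Finset.range n, c₀ * c j * a j x)
        = c₀ • fun x => (g x - ∑ j ∈ Finset.range n, c j * a j x) := by
      intro n; funext x
      simp only [Pi.smul_apply, smul_eq_mul, mul_sub, Finset.mul_sum]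
      congr 1
      exact Finset.sum_congr rfl fun j _ => by ring
    simp_rw [e, eLpNorm_const_smul]
    have := ENNReal.Tendsto.const_mul h.2.2 (Or.inr (by simp : (‖c₀‖₊ : ℝ≥0∞) ≠ ⊤))
    rw [mul_zero] at this; exact this

end Decomp


section Decomp2

variable {g g₁ g₂ : S.V → ℂ} {c c' : ℕ → ℂ} {a a' : ℕ → S.V → ℂ}

lemma decomp_interleave (h₁ : S.IsAtomicDecomp ⊤ g₁ c a)
    (h₂ : S.IsAtomicDecomp ⊤ g₂ c' a') :
    S.IsAtomicDecomp ⊤ (g₁ + g₂) (il c c') (il a a') := by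
  refine ⟨?_, ?_, ?_⟩
  · intro j
    by_cases hj : j % 2 = 0
    · simp only [il, if_pos hj]; exact h₁.1 _
    · simp only [il, if_neg hj]; exact h₂.1 _
  · refine Summable.even_add_odd ?_ ?_
    · have : (fun k => ‖il c c' (2 * k)‖) = fun k => ‖c k‖ := by
        funext k; rw [il_even]
      rw [this]; exact h₁.2.1
    · have : (fun k => ‖il c c' (2 * k + 1)‖) = fun k => ‖c' k‖ := by
        funext k; rw [il_odd]
      rw [this]; exact h₂.2.1
  · set u : ℕ → ℝ≥0∞ := fun n =>
      eLpNorm (fun x => (g₁ + g₂) x - ∑ j ∈ Finset.range n, il c c' j * il a a' j x) 1 S.μ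
      with hu_def
    set s₁ : ℕ → ℝ≥0∞ := fun n =>
      eLpNorm (fun x => g₁ x - ∑ j ∈ Finset.range n, c j * a j x) 1 S.μ with hs₁_def
    set s₂ : ℕ → ℝ≥0∞ := fun n =>
      eLpNorm (fun x => g₂ x - ∑ j ∈ Finset.range n, c' j * a' j x) 1 S.μ with hs₂_def
    set e : ℕ → ℝ≥0∞ := fun k => (‖c k‖₊ : ℝ≥0∞) with he_def
    have heven : ∀ k, u (2 * k) ≤ s₁ k + s₂ k := by
      intro k
      have hP : (fun x => (g₁ + g₂) x - ∑ j ∈ Finset.range (2 * k), il c c' j * il a a' j x)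
          = (fun x => g₁ x - ∑ j ∈ Finset.range k, c j * a j x)
            + fun x => g₂ x - ∑ j ∈ Finset.range k, c' j * a' j x := by
        funext x
        rw [Pi.add_apply, Pi.add_apply,
          sum_range_double (fun j => il c c' j * il a a' j x) k]
        simp only [il_even, il_odd]
        ring
      rw [hu_def]
      simp only [hP]
      exact eLpNorm_add_le (aesm _) (aesm _) le_rfl
    have hodd : ∀ k, u (2 * k + 1) ≤ s₁ k + s₂ k + e k := by
      intro k
      have hP : (fun x => (g₁ + g₂) x - ∑ j ∈ Finset.range (2 * k + 1), il c c' j * il a a' j x)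
          = (fun x => (g₁ + g₂) x - ∑ j ∈ Finset.range (2 * k), il c c' j * il a a' j x)
            - (c k • a k) := by
        funext x
        rw [Finset.sum_range_succ, il_even, il_even]
        simp only [Pi.sub_apply, Pi.smul_apply, smul_eq_mul]
        ring
      have h1 : u (2 * k + 1) ≤ u (2 * k) + eLpNorm (c k • a k) 1 S.μ := by
        rw [hu_def]
        simp only [hP]
        exact eLpNorm_sub_le (aesm _) (aesm _) le_rfl
      refine h1.trans ?_
      have h2 : eLpNorm (c k • a k) 1 S.μ ≤ e k := by
        rw [eLpNorm_const_smul]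
        calc (‖c k‖₊ : ℝ≥0∞) * eLpNorm (a k) 1 S.μ
            ≤ (‖c k‖₊ : ℝ≥0∞) * 1 :=
              mul_le_mul_right (atom_eLpNorm_one (h₁.1 k)) _
        _ = e k := by rw [mul_one]
      exact add_le_add (heven k) h2
    have hub : ∀ n, u n ≤ s₁ (n / 2) + s₂ (n / 2) + e (n / 2) := by
      intro n
      rcases Nat.even_or_odd n with ⟨k, hk⟩ | ⟨k, hk⟩
      · have : n = 2 * k := by omega
        rw [this, Nat.mul_div_cancel_left k (by norm_num)]
        exact (heven k).trans le_self_add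
      · have : n = 2 * k + 1 := by omega
        rw [this, show (2 * k + 1) / 2 = k by omega]
        exact hodd k
    have hdiv : Tendsto (fun n : ℕ => n / 2) atTop atTop :=
      tendsto_atTop_atTop.mpr fun b => ⟨2 * b, fun n hn => by omega⟩
    have he0 : Tendsto e atTop (𝓝 0) := by
      have h1 : Tendsto (fun k => ‖c k‖) atTop (𝓝 0) := h₁.2.1.tendsto_atTop_zero
      have h2 := (ENNReal.tendsto_ofReal (a := (0:ℝ)) h1)
      rw [ENNReal.ofReal_zero] at h2
      have : e = fun k => ENNReal.ofReal ‖c k‖ := by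
        funext k; rw [he_def, ofReal_norm]; rfl
      rw [this]
      exact h2
    have hrhs : Tendsto (fun n => s₁ (n / 2) + s₂ (n / 2) + e (n / 2)) atTop (𝓝 0) := by
      have := ((h₁.2.2.comp hdiv).add (h₂.2.2.comp hdiv)).add (he0.comp hdiv)
      simpa using this
    exact tendsto_of_tendsto_of_tendsto_of_le_of_le tendsto_const_nhds hrhs
      (fun n => zero_le) hub

lemma decomp_extend {n : ℕ} (hatoms : ∀ j < n, S.IsAtom ⊤ (a j))
    (hg : g = fun x => ∑ j ∈ Finset.range n, c j * a j x) :
    S.IsAtomicDecomp ⊤ g (fun j => if j < n then c j else 0)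
      (fun j => if j < n then a j else fun _ => 0) := by
  refine ⟨?_, ?_, ?_⟩
  · intro j
    by_cases hj : j < n
    · simpa only [if_pos hj] using hatoms j hj
    · simpa only [if_neg hj] using isAtom_zero (S := S)
  · refine summable_of_ne_finset_zero (s := Finset.range n) fun j hj => ?_
    rw [Finset.mem_range, not_lt] at hj
    simp only [if_neg (by omega : ¬ j < n), norm_zero]
  · have hev : ∀ N ≥ n, (fun x => g x - ∑ j ∈ Finset.range N,
        (if j < n then c j else 0) * (if j < n then a j else fun _ => 0) x) = fun _ => (0:ℂ) := by
      intro N hN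
      funext x
      have e1 : ∑ j ∈ Finset.range N,
          (if j < n then c j else 0) * (if j < n then a j else fun _ => 0) x
          = ∑ j ∈ Finset.range n, c j * a j x := by
        rw [← Finset.sum_subset (Finset.range_subset_range.mpr hN)
          (fun j _ hj => by rw [if_neg (by simpa using hj)]; ring)]
        refine Finset.sum_congr rfl fun j hj => ?_
        rw [Finset.mem_range] at hj
        rw [if_pos hj, if_pos hj]
      rw [e1, hg]
      ring
    refine Filter.Tendsto.congr' ?_ (tendsto_const_nhds (x := (0:ℝ≥0∞)))
    filter_upwards [Filter.eventually_ge_atTop n] with N hN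
    rw [hev N hN]
    rw [show (fun _ : S.V => (0 : ℂ)) = (0 : S.V → ℂ) from rfl, eLpNorm_zero]

lemma memH1_of_fin (hfin : S.MemH1fin ⊤ g) : S.MemH1 ⊤ g := by
  obtain ⟨n, c, a, hatoms, hg⟩ := hfin
  constructor
  · rw [hg]
    exact integrable_finset_sum _ fun j hj =>
      (atom_integrable (hatoms j (Finset.mem_range.mp hj))).const_mul (c j)
  · exact ⟨_, _, decomp_extend hatoms hg⟩

end Decomp2


section WLemma

variable {f g : S.V → ℂ}

lemma id_lip : ∀ z w : ℂ, ‖(fun y => y) z - (fun y => y) w‖ ≤ ‖z - w‖ :=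
  fun _ _ => le_rfl

/-- The pairing of `f` with a single atom, bounded by `2 * ‖f‖_BMO`. -/
lemma pairing_bound_id (hf : S.MemBMO 1 f) {b : S.V → ℂ} (hb : S.IsAtom ⊤ b) :
    ‖∫ x, f x * b x ∂S.μ‖ ≤ 2 * S.bmoNorm 1 f :=
  pairing_bound hf id_lip hb

lemma summable_pairing_id (hf : S.MemBMO 1 f) {d : ℕ → ℂ} {b : ℕ → S.V → ℂ}
    (hatoms : ∀ j, S.IsAtom ⊤ (b j)) (hsum : Summable fun j => ‖d j‖) :
    Summable (fun j => d j * ∫ x, f x * b j x ∂S.μ) := by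
  refine Summable.of_norm_bounded (g := fun j => ‖d j‖ * (2 * S.bmoNorm 1 f))
    (hsum.mul_right _) fun j => ?_
  rw [norm_mul]
  exact mul_le_mul_of_nonneg_left (pairing_bound_id hf (hatoms j)) (norm_nonneg _)

lemma summable_pairing (hf : S.MemBMO 1 f) {d : ℕ → ℂ} {b : ℕ → S.V → ℂ}
    (hatoms : ∀ j, S.IsAtom ⊤ (b j)) (hsum : Summable fun j => ‖d j‖)
    {T : ℂ → ℂ} (hT : ∀ z w, ‖T z - T w‖ ≤ ‖z - w‖) :
    Summable (fun j => d j * ∫ x, T (f x) * b j x ∂S.μ) := by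
  refine Summable.of_norm_bounded (g := fun j => ‖d j‖ * (2 * S.bmoNorm 1 f))
    (hsum.mul_right _) fun j => ?_
  rw [norm_mul]
  exact mul_le_mul_of_nonneg_left (pairing_bound hf hT (hatoms j)) (norm_nonneg _)

/-- Key well-definedness lemma: the pairing sum along any atomic decomposition
of the zero function vanishes. -/
lemma pairing_tsum_zero (hf : S.MemBMO 1 f) {d : ℕ → ℂ} {b : ℕ → S.V → ℂ}
    (hg0 : ∀ x, g x = 0) (hd : S.IsAtomicDecomp ⊤ g d b) :
    ∑' j, d j * ∫ x, f x * b j x ∂S.μ = 0 := by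
  obtain ⟨hatoms, hsum, htend⟩ := hd
  set B := S.bmoNorm 1 f with hB_def
  -- partial sums of the decomposition
  set Q : ℕ → S.V → ℂ := fun n x => ∑ j ∈ Finset.range n, d j * b j x with hQ_def
  have hQi : ∀ n, Integrable (Q n) S.μ := fun n =>
    integrable_finset_sum _ fun j _ => (atom_integrable (hatoms j)).const_mul (d j)
  have hQnorm : Tendsto (fun n => ∫ x, ‖Q n x‖ ∂S.μ) atTop (𝓝 0) := by
    have h1 : Tendsto (fun n => eLpNorm (Q n) 1 S.μ) atTop (𝓝 0) := by
      have e : ∀ n, (fun x => g x - ∑ j ∈ Finset.range n, d j * b j x)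
          = -(Q n) := by
        intro n; funext x
        simp only [Pi.neg_apply, hg0 x, hQ_def]
        ring
      have := htend
      simp only [e, eLpNorm_neg] at this
      exact this
    have h2 : ∀ n, ∫ x, ‖Q n x‖ ∂S.μ = (eLpNorm (Q n) 1 S.μ).toReal := by
      intro n
      rw [eLpNorm_one_eq_lintegral_enorm,
        ← ofReal_integral_norm_eq_lintegral_enorm (hQi n),
        ENNReal.toReal_ofReal (integral_nonneg fun x => norm_nonneg _)]
    have h3 := (ENNReal.tendsto_toReal (a := (0 : ℝ≥0∞)) (by simp)).comp h1
    simp only [ENNReal.toReal_zero] at h3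
    exact h3.congr fun n => (h2 n).symm
  -- step 1 : truncated pairings vanish
  have step1 : ∀ k : ℕ,
      (∑' j, d j * ∫ x, clampC (k : ℝ) (f x) * b j x ∂S.μ) = 0 := by
    intro k
    set Fk : S.V → ℂ := fun x => clampC (k : ℝ) (f x) with hFk_def
    have hsk : Summable (fun j => d j * ∫ x, Fk x * b j x ∂S.μ) :=
      summable_pairing hf hatoms hsum (clampC_lip (k : ℝ))
    have hpart : ∀ n, ∑ j ∈ Finset.range n, d j * ∫ x, Fk x * b j x ∂S.μ
        = ∫ x, Fk x * Q n x ∂S.μ := by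
      intro n
      have e1 : ∀ j ∈ Finset.range n, d j * ∫ x, Fk x * b j x ∂S.μ
          = ∫ x, d j * (Fk x * b j x) ∂S.μ := fun j _ =>
        (integral_const_mul (d j) _).symm
      rw [Finset.sum_congr rfl e1,
        ← integral_finset_sum _ (fun j _ => (mul_atom_integrable Fk (hatoms j)).const_mul (d j))]
      refine integral_congr_ae (Filter.EventuallyEq.of_eq (funext fun x => ?_))
      rw [hQ_def, Finset.mul_sum]
      exact Finset.sum_congr rfl fun j _ => by ring
    have hFkQ : ∀ n, Integrable (fun x => Fk x * Q n x) S.μ := by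
      intro n
      have e : (fun x => Fk x * Q n x)
          = fun x => ∑ j ∈ Finset.range n, d j * (Fk x * b j x) := by
        funext x
        rw [hQ_def, Finset.mul_sum]
        exact Finset.sum_congr rfl fun j _ => by ring
      rw [e]
      exact integrable_finset_sum _ fun j _ =>
        (mul_atom_integrable Fk (hatoms j)).const_mul (d j)
    have hbound : ∀ n, ‖∫ x, Fk x * Q n x ∂S.μ‖ ≤ (2 * k) * ∫ x, ‖Q n x‖ ∂S.μ := by
      intro n
      refine (norm_integral_le_integral_norm _).trans ?_
      rw [← integral_const_mul]
      refine integral_mono (hFkQ n).norm ((hQi n).norm.const_mul _) fun x => ?_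
      rw [norm_mul]
      exact mul_le_mul_of_nonneg_right (clampC_norm_le (by positivity) _) (norm_nonneg _)
    have hlim0 : Tendsto (fun n => ∫ x, Fk x * Q n x ∂S.μ) atTop (𝓝 0) := by
      rw [tendsto_zero_iff_norm_tendsto_zero]
      refine squeeze_zero (fun n => norm_nonneg _) hbound ?_
      have := hQnorm.const_mul (2 * (k:ℝ))
      simpa using this
    have hhs : Tendsto (fun n => ∑ j ∈ Finset.range n, d j * ∫ x, Fk x * b j x ∂S.μ)
        atTop (𝓝 (∑' j, d j * ∫ x, Fk x * b j x ∂S.μ)) :=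
      hsk.hasSum.tendsto_sum_nat
    have hhs' : Tendsto (fun n => ∫ x, Fk x * Q n x ∂S.μ)
        atTop (𝓝 (∑' j, d j * ∫ x, Fk x * b j x ∂S.μ)) :=
      hhs.congr hpart
    exact tendsto_nhds_unique hhs' hlim0
  -- step 2 : convergence of truncated pairings to the full pairing
  have step2 : Tendsto (fun k : ℕ => ∑' j, d j * ∫ x, clampC (k : ℝ) (f x) * b j x ∂S.μ)
      atTop (𝓝 (∑' j, d j * ∫ x, f x * b j x ∂S.μ)) := by
    refine tendsto_tsum_of_dominated_convergence
      (f := fun (k : ℕ) (j : ℕ) => d j * ∫ x, clampC (k : ℝ) (f x) * b j x ∂S.μ)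
      (bound := fun j => ‖d j‖ * (2 * B)) (hsum.mul_right _) (fun j => ?_) ?_
    · -- pointwise convergence, eventually constant
      obtain ⟨R, hsuppj, -, -⟩ := hatoms j
      set sj : Finset S.V := (env_finite R).toFinset with hsj_def
      have hsubj : support (b j) ⊆ ↑sj := by
        rw [hsj_def, Set.Finite.coe_toFinset]; exact hsuppj
      set t₀ : ℝ := ∑ x ∈ sj, (|(f x).re| + |(f x).im|) with ht₀_def
      have hterm : ∀ x ∈ sj, |(f x).re| ≤ t₀ ∧ |(f x).im| ≤ t₀ := by
        intro x hx
        have h1 : (|(f x).re| + |(f x).im|) ≤ t₀ :=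
          Finset.single_le_sum (f := fun x => (|(f x).re| + |(f x).im|))
            (fun y _ => by positivity) hx
        constructor <;> [linarith [abs_nonneg (f x).im]; linarith [abs_nonneg (f x).re]]
      have hconst : ∀ k : ℕ, t₀ ≤ k →
          ∫ x, clampC (k : ℝ) (f x) * b j x ∂S.μ = ∫ x, f x * b j x ∂S.μ := by
        intro k hk
        rw [integral_eq_sum ((support_mul_subset _ (b j)).trans hsubj),
          integral_eq_sum ((support_mul_subset _ (b j)).trans hsubj)]
        refine Finset.sum_congr rfl fun x hx => ?_
        rw [clampC_eq ((hterm x hx).1.trans hk) ((hterm x hx).2.trans hk)]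
      refine Filter.Tendsto.congr' ?_ tendsto_const_nhds
      filter_upwards [Filter.eventually_ge_atTop ⌈t₀⌉₊] with k hk
      rw [hconst k ((Nat.le_ceil t₀).trans (by exact_mod_cast hk))]
    · exact Filter.Eventually.of_forall fun k j => by
        rw [norm_mul]
        exact mul_le_mul_of_nonneg_left
          (pairing_bound hf (clampC_lip (k:ℝ)) (hatoms j)) (norm_nonneg _)
  have h0 : Tendsto (fun _ : ℕ => (0 : ℂ)) atTop
      (𝓝 (∑' j, d j * ∫ x, f x * b j x ∂S.μ)) := step2.congr step1
  exact (tendsto_nhds_unique h0 tendsto_const_nhds)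

end WLemma


section Split

variable {f : S.V → ℂ}

lemma tsum_il_split (hf : S.MemBMO 1 f) {c₁ c₂ : ℕ → ℂ} {a₁ a₂ : ℕ → S.V → ℂ}
    (h₁ : ∀ j, S.IsAtom ⊤ (a₁ j)) (hs₁ : Summable fun j => ‖c₁ j‖)
    (h₂ : ∀ j, S.IsAtom ⊤ (a₂ j)) (hs₂ : Summable fun j => ‖c₂ j‖) :
    ∑' j, il c₁ c₂ j * ∫ x, f x * il a₁ a₂ j x ∂S.μ
      = (∑' j, c₁ j * ∫ x, f x * a₁ j x ∂S.μ)
        + ∑' j, c₂ j * ∫ x, f x * a₂ j x ∂S.μ := by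
  set v : ℕ → ℂ := fun j => il c₁ c₂ j * ∫ x, f x * il a₁ a₂ j x ∂S.μ with hv_def
  have he : (fun k => v (2 * k)) = fun k => c₁ k * ∫ x, f x * a₁ k x ∂S.μ := by
    funext k; rw [hv_def]; simp only [il_even]
  have ho : (fun k => v (2 * k + 1)) = fun k => c₂ k * ∫ x, f x * a₂ k x ∂S.μ := by
    funext k; rw [hv_def]; simp only [il_odd]
  have hse : Summable fun k => v (2 * k) := by
    rw [he]; exact summable_pairing_id hf h₁ hs₁
  have hso : Summable fun k => v (2 * k + 1) := by
    rw [ho]; exact summable_pairing_id hf h₂ hs₂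
  rw [← tsum_even_add_odd hse hso, he, ho]

end Split


section Main

variable {f : S.V → ℂ}

lemma pairing_tsum_eq (hf : S.MemBMO 1 f) {g : S.V → ℂ} {c₁ c₂ : ℕ → ℂ}
    {a₁ a₂ : ℕ → S.V → ℂ}
    (hd₁ : S.IsAtomicDecomp ⊤ g c₁ a₁) (hd₂ : S.IsAtomicDecomp ⊤ g c₂ a₂) :
    ∑' j, c₁ j * ∫ x, f x * a₁ j x ∂S.μ = ∑' j, c₂ j * ∫ x, f x * a₂ j x ∂S.μ := by
  have hneg := decomp_neg hd₂
  have hint := decomp_interleave hd₁ hneg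
  have h0 : ∀ x, (g + fun y => - g y) x = 0 := fun x => by simp
  have hW := pairing_tsum_zero hf h0 hint
  rw [tsum_il_split hf hd₁.1 hd₁.2.1 hd₂.1 (by simpa using hd₂.2.1)] at hW
  have hneg2 : (∑' j, (fun i => - c₂ i) j * ∫ x, f x * a₂ j x ∂S.μ)
      = - ∑' j, c₂ j * ∫ x, f x * a₂ j x ∂S.μ := by
    rw [← tsum_neg]
    congr 1
    funext j
    ring
  rw [hneg2] at hW
  have h3 : (∑' j, c₁ j * ∫ x, f x * a₁ j x ∂S.μ)
      - (∑' j, c₂ j * ∫ x, f x * a₂ j x ∂S.μ) = 0 := by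
    rw [sub_eq_add_neg]; exact hW
  exact sub_eq_zero.mp h3

end Main


end HomTreeSetting


/-- There exists `A > 0` such that every `f ∈ BMO_1(μ)` induces
a bounded linear functional `L_f` on `H^1(μ) = H^{1,∞}(μ)` with
`L_f(g) = ∫ f g dμ` for every `g ∈ H^{1,∞}_fin(μ)` and `‖L_f‖_{(H^1)^*} ≤ A ‖f‖_{BMO_1}`. -/
theorem bmo_gives_functional_on_H1 (m : ℕ) (S : HomTreeSetting m) :
    ∃ A : ℝ, 0 < A ∧ ∀ f : S.V → ℂ, S.MemBMO 1 f →
      ∃ L : (S.V → ℂ) → ℂ,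
        (∀ g₁ g₂ : S.V → ℂ, S.MemH1 ⊤ g₁ → S.MemH1 ⊤ g₂ →
          L (g₁ + g₂) = L g₁ + L g₂) ∧
        (∀ (c : ℂ) (g : S.V → ℂ), S.MemH1 ⊤ g → L (c • g) = c * L g) ∧
        (∀ g : S.V → ℂ, S.MemH1fin ⊤ g → L g = ∫ x, f x * g x ∂S.μ) ∧
        (∀ g : S.V → ℂ, S.MemH1 ⊤ g → ‖L g‖ ≤ A * S.bmoNorm 1 f * S.h1Norm ⊤ g) := by
  classical
  refine ⟨2, by norm_num, fun f hf => ?_⟩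
  set B := S.bmoNorm 1 f with hB_def
  set L : (S.V → ℂ) → ℂ := fun g =>
    if hg : S.MemH1 ⊤ g then
      ∑' j, hg.2.choose j * ∫ x, f x * hg.2.choose_spec.choose j x ∂S.μ
    else 0 with hL_def
  have hLval : ∀ (g : S.V → ℂ) (hg : S.MemH1 ⊤ g) (c : ℕ → ℂ) (a : ℕ → S.V → ℂ),
      S.IsAtomicDecomp ⊤ g c a → L g = ∑' j, c j * ∫ x, f x * a j x ∂S.μ := by
    intro g hg c a hd
    rw [hL_def]
    simp only [dif_pos hg]
    exact HomTreeSetting.pairing_tsum_eq hf hg.2.choose_spec.choose_spec hd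
  refine ⟨L, ?_, ?_, ?_, ?_⟩
  · -- additivity
    intro g₁ g₂ h₁ h₂
    obtain ⟨c₁, a₁, hd₁⟩ := h₁.2
    obtain ⟨c₂, a₂, hd₂⟩ := h₂.2
    have hdsum := HomTreeSetting.decomp_interleave hd₁ hd₂
    have hmem : S.MemH1 ⊤ (g₁ + g₂) := ⟨h₁.1.add h₂.1, _, _, hdsum⟩
    rw [hLval _ hmem _ _ hdsum, hLval _ h₁ _ _ hd₁, hLval _ h₂ _ _ hd₂]
    exact HomTreeSetting.tsum_il_split hf hd₁.1 hd₁.2.1 hd₂.1 hd₂.2.1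
  · -- homogeneity
    intro c g hg
    obtain ⟨cs, as, hd⟩ := hg.2
    have hds := HomTreeSetting.decomp_smul c hd
    have hmem : S.MemH1 ⊤ (c • g) := ⟨hg.1.smul c, _, _, hds⟩
    rw [hLval _ hmem _ _ hds, hLval _ hg _ _ hd, ← tsum_mul_left]
    congr 1
    funext j
    ring
  · -- value on finite combinations
    intro g hfin
    have hg := HomTreeSetting.memH1_of_fin hfin
    obtain ⟨n, c, a, hatoms, hrep⟩ := hfin
    have hd := HomTreeSetting.decomp_extend hatoms hrep
    rw [hLval _ hg _ _ hd]
    have h1 : (∑' j, (if j < n then c j else 0)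
        * ∫ x, f x * (if j < n then a j else fun _ => (0:ℂ)) x ∂S.μ)
        = ∑ j ∈ Finset.range n,
            ((if j < n then c j else 0)
              * ∫ x, f x * (if j < n then a j else fun _ => (0:ℂ)) x ∂S.μ) := by
      refine tsum_eq_sum fun j hj => ?_
      rw [Finset.mem_range, not_lt] at hj
      simp only [if_neg (by omega : ¬ j < n), zero_mul]
    rw [h1]
    have h2 : ∀ j ∈ Finset.range n,
        ((if j < n then c j else 0)
          * ∫ x, f x * (if j < n then a j else fun _ => (0:ℂ)) x ∂S.μ)
        = ∫ x, c j * (f x * a j x) ∂S.μ := by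
      intro j hj
      rw [Finset.mem_range] at hj
      simp only [if_pos hj]
      exact (integral_const_mul _ _).symm
    rw [Finset.sum_congr rfl h2, ← integral_finset_sum _
      (fun j hj => (HomTreeSetting.mul_atom_integrable f
        (hatoms j (Finset.mem_range.mp hj))).const_mul (c j))]
    refine integral_congr_ae (Filter.EventuallyEq.of_eq (funext fun x => ?_))
    rw [hrep, Finset.mul_sum]
    exact Finset.sum_congr rfl fun j _ => by ring
  · -- the norm bound
    intro g hg
    have hB0 : 0 ≤ B := HomTreeSetting.bmoNorm_nonneg hf
    have key : ∀ t ∈ {t : ℝ | ∃ c a, S.IsAtomicDecomp ⊤ g c a ∧ t = ∑' j, ‖c j‖},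
        ‖L g‖ ≤ 2 * B * t := by
      rintro t ⟨c, a, hd, rfl⟩
      rw [hLval g hg c a hd]
      have hsumm : Summable (fun j => ‖c j * ∫ x, f x * a j x ∂S.μ‖) := by
        refine Summable.of_nonneg_of_le (fun j => norm_nonneg _) (fun j => ?_)
          (hd.2.1.mul_right (2 * B))
        rw [norm_mul]
        exact mul_le_mul_of_nonneg_left
          (HomTreeSetting.pairing_bound_id hf (hd.1 j)) (norm_nonneg _)
      calc ‖∑' j, c j * ∫ x, f x * a j x ∂S.μ‖
          ≤ ∑' j, ‖c j * ∫ x, f x * a j x ∂S.μ‖ := norm_tsum_le_tsum_norm hsumm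
      _ ≤ ∑' j, ‖c j‖ * (2 * B) := by
          refine hsumm.tsum_le_tsum (fun j => ?_) (hd.2.1.mul_right (2 * B))
          rw [norm_mul]
          exact mul_le_mul_of_nonneg_left
            (HomTreeSetting.pairing_bound_id hf (hd.1 j)) (norm_nonneg _)
      _ = (∑' j, ‖c j‖) * (2 * B) := tsum_mul_right
      _ = 2 * B * (∑' j, ‖c j‖) := by ring
    have hne : ({t : ℝ | ∃ c a, S.IsAtomicDecomp ⊤ g c a ∧ t = ∑' j, ‖c j‖}).Nonempty := by
      obtain ⟨c, a, hd⟩ := hg.2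
      exact ⟨_, c, a, hd, rfl⟩
    rw [show S.h1Norm ⊤ g
        = sInf {t : ℝ | ∃ c a, S.IsAtomicDecomp ⊤ g c a ∧ t = ∑' j, ‖c j‖} from rfl]
    rcases eq_or_lt_of_le (by linarith : (0:ℝ) ≤ 2 * B) with heq | hpos
    · obtain ⟨t, ht⟩ := hne
      have h3 := key t ht
      rw [← heq, zero_mul] at h3
      have h4 : 0 ≤ sInf {t : ℝ | ∃ c a, S.IsAtomicDecomp ⊤ g c a ∧ t = ∑' j, ‖c j‖} := by
        refine le_csInf ⟨t, ht⟩ ?_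
        rintro t' ⟨c, a, hd, rfl⟩
        exact tsum_nonneg fun j => norm_nonneg _
      nlinarith [norm_nonneg (L g)]
    · have hdiv : ∀ t ∈ {t : ℝ | ∃ c a, S.IsAtomicDecomp ⊤ g c a ∧ t = ∑' j, ‖c j‖},
          ‖L g‖ / (2 * B) ≤ t := fun t ht =>
        (div_le_iff₀ hpos).mpr (by linarith [key t ht, mul_comm t (2 * B)])
      have hle := le_csInf hne hdiv
      calc ‖L g‖ = (‖L g‖ / (2 * B)) * (2 * B) := (div_mul_cancel₀ _ hpos.ne').symm
      _ ≤ sInf {t : ℝ | ∃ c a, S.IsAtomicDecomp ⊤ g c a ∧ t = ∑' j, ‖c j‖} * (2 * B) :=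
          mul_le_mul_of_nonneg_right hle (by linarith)
      _ = 2 * B * sInf {t : ℝ | ∃ c a, S.IsAtomicDecomp ⊤ g c a ∧ t = ∑' j, ‖c j‖} := by
          ring
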